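/- Let v = (v_0,...,v_{2k}) ∈ ℝ^{2k+1} with v_0 > 0 be a singular sequence of rank r ≤ k whose Hankel matrix A_v is positive semidefinite, and let (φ_0,...,φ_{r-1}) := A_v(r-1)^{-1}(v_r,...,v_{2r-1})^T. Then the recursion v_j = φ_0 v_{j-r} + ... + φ_{r-1} v_{j-1} holds for all j = r, ..., 2k-1. -/

import Mathlib

open Matrix MeasureTheory

noncomputable section

/-- The `(k+1) × (k+1)` Hankel matrix `A_v = (v_{i+j})_{i,j=0}^k`. -/
def hankel (k : ℕ) (v : ℕ → ℝ) : Matrix (Fin (k+1)) (Fin (k+1)) ℝ :=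
  Matrix.of fun i j => v (i.1 + j.1)

/-- The top-left `r × r` corner `A_v(r-1) = (v_{i+j})_{i,j=0}^{r-1}`. -/
def hcorner (v : ℕ → ℝ) (r : ℕ) : Matrix (Fin r) (Fin r) ℝ :=
  Matrix.of fun i j => v (i.1 + j.1)

/-- The `(j+1)`-th column of the Hankel matrix `A_v`. -/
def hcol (k : ℕ) (v : ℕ → ℝ) (j : ℕ) : Fin (k+1) → ℝ :=
  fun i => v (i.1 + j)

/-- `r = rank v`: column `v_r` lies in the span of the preceding columns, and `r`
is minimal with this property. -/
def seqRank (k : ℕ) (v : ℕ → ℝ) (r : ℕ) : Prop :=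
  hcol k v r ∈ Submodule.span ℝ (hcol k v '' {j | j < r}) ∧
  ∀ i < r, hcol k v i ∉ Submodule.span ℝ (hcol k v '' {j | j < i})

/-- `φ = A_v(r-1)⁻¹ (v_r,…,v_{2r-1})ᵀ`. -/
def phi (v : ℕ → ℝ) (r : ℕ) : Fin r → ℝ :=
  (hcorner v r)⁻¹.mulVec fun i => v (r + i.1)

theorem stmt1 (k r : ℕ) (v : ℕ → ℝ) (hv0 : 0 < v 0)
    (hpsd : (hankel k v).PosSemidef) (hsing : (hankel k v).det = 0)
    (hr : r ≤ k) (hrank : seqRank k v r) :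
    ∀ j, r ≤ j → j + 1 ≤ 2*k →
      v j = ∑ i : Fin r, phi v r i * v (j - r + i.1) := by
  classical
  -- get coefficients c with ∑ c i • hcol i = hcol r
  have himg : hcol k v '' {j | j < r} = Set.range (fun i : Fin r => hcol k v i.1) := by
    ext x
    constructor
    · rintro ⟨j, hj, rfl⟩; exact ⟨⟨j, hj⟩, rfl⟩
    · rintro ⟨i, rfl⟩; exact ⟨i.1, i.2, rfl⟩
  obtain ⟨c, hc⟩ := (Submodule.mem_span_range_iff_exists_fun ℝ).mp (himg ▸ hrank.1)
  -- the error sequence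
  set E : ℕ → ℝ := fun m => (∑ i : Fin r, c i * v (m + i.1)) - v (m + r) with hE
  have base : ∀ m ≤ k, E m = 0 := by
    intro m hm
    have := congrFun hc ⟨m, by omega⟩
    simp only [Finset.sum_apply, Pi.smul_apply, hcol, smul_eq_mul] at this
    simp [hE, this]
  -- the extended coefficient function
  set C : ℕ → ℝ := fun n => if h : n < r then c ⟨n, h⟩ else if n = r then -1 else 0 with hC
  have hCr : C r = -1 := by simp [hC]
  have hCbig : ∀ n, r < n → C n = 0 := by
    intro n hn; simp [hC, Nat.lt_asymm hn, Nat.ne_of_gt hn]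
  have hCsmall : ∀ (n : ℕ) (h : n < r), C n = c ⟨n, h⟩ := by
    intro n h; simp [hC, h]
  -- shifted kernel vectors
  set W : ℕ → ℕ → ℝ := fun s p => if s ≤ p then C (p - s) else 0 with hW
  set w : ℕ → Fin (k+1) → ℝ := fun s p => W s p.1 with hw
  -- key computation
  have hmul : ∀ s, s + r ≤ k → ∀ p : Fin (k+1),
      ((hankel k v) *ᵥ (w s)) p = E (p.1 + s) := by
    intro s hs p
    have h0 : ((hankel k v) *ᵥ (w s)) p = ∑ j ∈ Finset.range (k+1), v (p.1 + j) * W s j := by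
      simp only [Matrix.mulVec, dotProduct, hankel, Matrix.of_apply, hw]
      exact Fin.sum_univ_eq_sum_range (fun j => v (p.1 + j) * W s j) (k+1)
    rw [h0]
    have h2 : (Finset.range (r+1)).image (· + s) ⊆ Finset.range (k+1) := by
      intro x hx
      simp only [Finset.mem_image, Finset.mem_range] at hx ⊢
      obtain ⟨t, ht, rfl⟩ := hx; omega
    have h1 : ∀ j ∈ Finset.range (k+1), j ∉ (Finset.range (r+1)).image (· + s) →
        v (p.1 + j) * W s j = 0 := by
      intro j _ hj
      simp only [Finset.mem_image, Finset.mem_range] at hj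
      by_cases hsj : s ≤ j
      · have : r < j - s := by
          by_contra hle
          exact hj ⟨j - s, by omega, by omega⟩
        simp [hW, hsj, hCbig _ this]
      · simp [hW, hsj]
    rw [← Finset.sum_subset h2 h1,
      Finset.sum_image (fun a _ b _ h => by exact Nat.add_right_cancel h)]
    have h3 : ∀ t ∈ Finset.range (r+1), v (p.1 + (t + s)) * W s (t + s) = C t * v (p.1 + s + t) := by
      intro t _
      have : W s (t + s) = C t := by simp [hW]
      rw [this, mul_comm, show p.1 + (t + s) = p.1 + s + t from by omega]
    rw [Finset.sum_congr rfl h3, Finset.sum_range_succ, hCr]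
    have h4 : ∑ t ∈ Finset.range r, C t * v (p.1 + s + t)
        = ∑ i : Fin r, c i * v (p.1 + s + i.1) := by
      rw [← Fin.sum_univ_eq_sum_range (fun t => C t * v (p.1 + s + t)) r]
      exact Finset.sum_congr rfl fun i _ => by rw [hCsmall i.1 i.2]
    rw [h4]
    simp [hE]
    ring
  -- the inductive propagation
  have Q : ∀ s, s + r + 1 ≤ k → ∀ m ≤ k + s, E m = 0 := by
    intro s
    induction s with
    | zero => intro _ m hm; exact base m (by omega)
    | succ s ih =>
      intro hs m hm
      have ih' : ∀ m ≤ k + s, E m = 0 := ih (by omega)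
      -- the quadratic form of the shifted vector vanishes
      have hq : w (s+1) ⬝ᵥ ((hankel k v) *ᵥ (w (s+1))) = 0 := by
        apply Finset.sum_eq_zero
        intro p _
        rw [hmul (s+1) (by omega) p]
        by_cases h1 : s + 1 ≤ p.1
        · by_cases h2 : p.1 - (s+1) ≤ r
          · have : E (p.1 + (s+1)) = 0 := ih' _ (by omega)
            simp [this]
          · have : C (p.1 - (s+1)) = 0 := hCbig _ (by omega)
            simp [hw, hW, h1, this]
        · simp [hw, hW, h1]
      have hker : (hankel k v) *ᵥ (w (s+1)) = 0 := by
        apply (hpsd.dotProduct_mulVec_zero_iff (w (s+1))).mp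
        simpa using hq
      by_cases hms : m ≤ k + s
      · exact ih' m hms
      · have hm' : m = k + s + 1 := by omega
        have := congrFun hker ⟨k, by omega⟩
        rw [hmul (s+1) (by omega) ⟨k, by omega⟩] at this
        simpa [hm', add_assoc] using this
  -- all needed recursions
  have hEall : ∀ m, m + r + 1 ≤ 2*k → E m = 0 := by
    intro m hm
    by_cases hmk : m ≤ k
    · exact base m hmk
    · exact Q (m - k) (by omega) m (by omega)
  -- invertibility of the corner matrix
  have hdet : IsUnit (hcorner v r).det := by
    by_contra hdetz
    have hdet0 : (hcorner v r).det = 0 := by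
      rcases eq_or_ne ((hcorner v r).det) 0 with h | h
      · exact h
      · exact absurd (IsUnit.mk0 _ h) hdetz
    obtain ⟨x, hx0, hxv⟩ := (Matrix.exists_mulVec_eq_zero_iff).mpr hdet0
    -- extend x by zeros
    set y : Fin (k+1) → ℝ := fun p => if h : p.1 < r then x ⟨p.1, h⟩ else 0 with hy
    have hymul : ∀ p : Fin (k+1),
        ((hankel k v) *ᵥ y) p = ∑ j : Fin r, x j * v (p.1 + j.1) := by
      intro p
      simp only [Matrix.mulVec, dotProduct, hankel, Matrix.of_apply, hy]
      rw [Fin.sum_univ_eq_sum_range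
        (fun j => v (p.1 + j) * if h : j < r then x ⟨j, h⟩ else 0) (k+1)]
      rw [← Finset.sum_subset (Finset.range_subset_range.mpr (by omega : r ≤ k + 1))
        (fun j _ hj => by
          have : ¬ j < r := by simpa using hj
          simp [this])]
      rw [← Fin.sum_univ_eq_sum_range
        (fun j => v (p.1 + j) * if h : j < r then x ⟨j, h⟩ else 0) r]
      exact Finset.sum_congr rfl fun i _ => by simp [i.2, mul_comm]
    have hAy0 : ∀ i : Fin r, ((hankel k v) *ᵥ y) ⟨i.1, by omega⟩ = 0 := by
      intro i
      rw [hymul]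
      have := congrFun hxv i
      simp only [Matrix.mulVec, dotProduct, hcorner, Matrix.of_apply, Pi.zero_apply] at this
      rw [← this]
      exact Finset.sum_congr rfl fun j _ => by rw [mul_comm]
    have hq : y ⬝ᵥ ((hankel k v) *ᵥ y) = 0 := by
      apply Finset.sum_eq_zero
      intro p _
      by_cases hp : p.1 < r
      · have : ((hankel k v) *ᵥ y) p = 0 := by
          have := hAy0 ⟨p.1, hp⟩
          convert this using 2
        rw [this, mul_zero]
      · simp [hy, hp]
    have hker : (hankel k v) *ᵥ y = 0 := by
      apply (hpsd.dotProduct_mulVec_zero_iff y).mp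
      simpa using hq
    have hzero : ∑ j : Fin r, x j • hcol k v j.1 = 0 := by
      funext p
      have h1 := congrFun hker p
      rw [hymul p] at h1
      simpa [Finset.sum_apply, hcol, smul_eq_mul] using h1
    -- take the maximal nonzero index
    have hex : ∃ i, x i ≠ 0 := Function.ne_iff.mp hx0
    set sfin : Finset (Fin r) := Finset.univ.filter (fun i => x i ≠ 0) with hsfin
    have hne : sfin.Nonempty := ⟨hex.choose, by simp [hsfin, hex.choose_spec]⟩
    set i := sfin.max' hne with hi
    have hxi : x i ≠ 0 := by
      have := sfin.max'_mem hne
      simpa [hsfin] using this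
    have hgt : ∀ j, i < j → x j = 0 := by
      intro j hj
      by_contra h
      exact absurd (Finset.le_max' sfin j (by simp [hsfin, h])) (not_le.mpr hj)
    -- split the sum
    have hsplit : (∑ j ∈ Finset.univ.filter (fun j => j < i), x j • hcol k v j.1)
        + x i • hcol k v i.1 = 0 := by
      rw [← hzero]
      rw [← Finset.sum_filter_add_sum_filter_not Finset.univ (fun j => j < i)
        (fun j => x j • hcol k v j.1)]
      congr 1
      rw [Finset.sum_eq_single_of_mem i (by simp)]
      intro b hb hbne
      have : i < b := by
        rcases lt_trichotomy i b with h | h | h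
        · exact h
        · exact absurd h (Ne.symm hbne ∘ id)
        · exact absurd h (by simpa using hb)
      rw [hgt b this, zero_smul]
    have hS1 : (∑ j ∈ Finset.univ.filter (fun j => j < i), x j • hcol k v j.1)
        ∈ Submodule.span ℝ (hcol k v '' {j | j < i.1}) := by
      apply Submodule.sum_mem
      intro j hj
      apply Submodule.smul_mem
      exact Submodule.subset_span ⟨j.1, by simpa using hj, rfl⟩
    have hcoli : hcol k v i.1 ∈ Submodule.span ℝ (hcol k v '' {j | j < i.1}) := by
      have h5 : x i • hcol k v i.1
          = -(∑ j ∈ Finset.univ.filter (fun j => j < i), x j • hcol k v j.1) :=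
        eq_neg_of_add_eq_zero_right hsplit
      have h6 : hcol k v i.1 = (x i)⁻¹ • (x i • hcol k v i.1) := by
        rw [smul_smul, inv_mul_cancel₀ hxi, one_smul]
      rw [h6, h5]
      exact Submodule.smul_mem _ _ (Submodule.neg_mem _ hS1)
    exact hrank.2 i.1 i.2 hcoli
  -- φ = c
  have hBc : (hcorner v r) *ᵥ c = fun i => v (r + i.1) := by
    funext i
    have h0 := base i.1 (by omega)
    simp only [hE, sub_eq_zero] at h0
    simp only [Matrix.mulVec, dotProduct, hcorner, Matrix.of_apply]
    rw [show r + i.1 = i.1 + r by omega, ← h0]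
    exact Finset.sum_congr rfl fun j _ => by rw [mul_comm]
  have hphic : phi v r = c := by
    rw [phi, ← hBc, Matrix.mulVec_mulVec, Matrix.nonsing_inv_mul _ hdet, Matrix.one_mulVec]
  -- conclusion
  intro j hjr hj2k
  have hEj := hEall (j - r) (by omega)
  simp only [hE, sub_eq_zero] at hEj
  rw [Nat.sub_add_cancel hjr] at hEj
  rw [hphic, ← hEj]
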